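/- arXiv:2010.13514 — 4 statements merged into one kernel-verified Lean document; each statement's English description precedes it below -/
import Mathlib

section
/- Under the STN perturbed training objective for ridge regression, the stationary point in w₀ is biased: for fixed λ₀ > 0, Θ ∈ ℝ^m, σ > 0 and scalar Gaussian ε ~ N(0, σ²), the minimizer over w₀ of E_ε[(1/2n)‖X(w₀+Θε) − t‖² + ((λ₀+ε)/2n)‖w₀+Θε‖²] is w₀* = (XᵀX + λ₀I)⁻¹(Xᵀt − σ²Θ), which differs from the ridge solution (XᵀX + λ₀I)⁻¹Xᵀt whenever Θ ≠ 0. -/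
open Matrix MeasureTheory ProbabilityTheory Real Filter Asymptotics Topology
open scoped NNReal ENNReal

-- second moment integral
lemma STN.integral_sq_exp {b : ℝ} (hb : 0 < b) :
    ∫ x : ℝ, x ^ 2 * Real.exp (-b * x ^ 2) = Real.sqrt (π / b) / (2 * b) := by
  have hint2 : Integrable (fun x : ℝ => x ^ 2 * Real.exp (-b * x ^ 2)) := by
    have h := integrable_rpow_mul_exp_neg_mul_sq hb (s := 2) (by norm_num)
    have h2 : ∀ x : ℝ, x ^ (2 : ℝ) = x ^ 2 := fun x => by
      rw [show (2:ℝ) = ((2:ℕ):ℝ) by norm_num, Real.rpow_natCast]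
    simp_rw [h2] at h
    exact h
  have hderiv : ∀ x : ℝ, HasDerivAt (fun x : ℝ => x * Real.exp (-b * x ^ 2))
      (Real.exp (-b * x ^ 2) - 2 * b * (x ^ 2 * Real.exp (-b * x ^ 2))) x := by
    intro x
    have h1 : HasDerivAt (fun x : ℝ => -b * x ^ 2) (-b * (2 * x)) x := by
      simpa using (hasDerivAt_pow 2 x).const_mul (-b)
    have h3 := (hasDerivAt_id x).mul h1.exp
    refine h3.congr_deriv ?_
    simp only [id]
    ring
  have htop : Tendsto (fun x : ℝ => x * Real.exp (-b * x ^ 2)) atTop (𝓝 0) := by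
    have hlo := rpow_mul_exp_neg_mul_sq_isLittleO_exp_neg hb 1
    have hlo' : (fun x : ℝ => x * Real.exp (-b * x ^ 2)) =o[atTop]
        fun x : ℝ => Real.exp (-(1/2) * x) := by
      refine hlo.congr' ?_ (EventuallyEq.refl _ _)
      filter_upwards with x
      rw [Real.rpow_one]
    have hexp : Tendsto (fun x : ℝ => Real.exp (-(1/2) * x)) atTop (𝓝 0) := by
      have h4 : Tendsto (fun x : ℝ => -(1/2) * x) atTop atBot := by
        have h4' : Tendsto (fun x : ℝ => (1/2) * x) atTop atTop :=
          Tendsto.const_mul_atTop (show (0:ℝ) < 1/2 by norm_num) tendsto_id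
        have h5 := tendsto_neg_atTop_atBot.comp h4'
        refine h5.congr fun x => ?_
        simp [Function.comp]
      exact Real.tendsto_exp_atBot.comp h4
    exact hlo'.isBigO.trans_tendsto hexp
  have hbot : Tendsto (fun x : ℝ => x * Real.exp (-b * x ^ 2)) atBot (𝓝 0) := by
    have h6 := (htop.comp tendsto_neg_atBot_atTop).neg
    rw [neg_zero] at h6
    refine h6.congr fun x => ?_
    simp only [Function.comp, neg_mul]
    have : (-x) ^ 2 = x ^ 2 := by ring
    rw [this]; ring
  have hfint : Integrable (fun x : ℝ =>
      Real.exp (-b * x ^ 2) - 2 * b * (x ^ 2 * Real.exp (-b * x ^ 2))) :=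
    (integrable_exp_neg_mul_sq hb).sub (hint2.const_mul _)
  have key := integral_of_hasDerivAt_of_tendsto hderiv hfint hbot htop
  rw [sub_zero, integral_sub (integrable_exp_neg_mul_sq hb) (hint2.const_mul _),
    integral_const_mul, integral_gaussian] at key
  have hb' : 2 * b ≠ 0 := by positivity
  field_simp at key ⊢
  linarith

namespace STN
variable {v : ℝ≥0}

lemma pdf_eq (hv : (0:ℝ) < v) (x : ℝ) :
    gaussianPDFReal 0 v x = (Real.sqrt (2 * π * v))⁻¹ * Real.exp (-(2 * (v:ℝ))⁻¹ * x ^ 2) := by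
  rw [gaussianPDFReal]
  congr 1
  congr 1
  rw [sub_zero]
  field_simp

lemma integral_gaussian_eq (hv : v ≠ 0) (g : ℝ → ℝ) :
    ∫ x, g x ∂(gaussianReal 0 v) = ∫ x, gaussianPDFReal 0 v x * g x := by
  rw [gaussianReal_of_var_ne_zero 0 hv, gaussianPDF_def]
  have : (fun x => ENNReal.ofReal (gaussianPDFReal 0 v x))
      = fun x => ((gaussianPDFReal 0 v x).toNNReal : ℝ≥0∞) := rfl
  rw [this, integral_withDensity_eq_integral_smul
    (measurable_gaussianPDFReal 0 v).real_toNNReal]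
  congr 1
  ext x
  rw [NNReal.smul_def, Real.coe_toNNReal _ (gaussianPDFReal_nonneg 0 v x), smul_eq_mul]

lemma integrable_pow_gaussian (hv : v ≠ 0) (k : ℕ) :
    Integrable (fun x : ℝ => x ^ k) (gaussianReal 0 v) := by
  have hv' : (0:ℝ) < v := lt_of_le_of_ne v.2 (by exact_mod_cast (Ne.symm hv))
  have hb : (0:ℝ) < (2 * (v:ℝ))⁻¹ := by positivity
  rw [gaussianReal_of_var_ne_zero 0 hv, gaussianPDF_def]
  have : (fun x => ENNReal.ofReal (gaussianPDFReal 0 v x))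
      = fun x => ((gaussianPDFReal 0 v x).toNNReal : ℝ≥0∞) := rfl
  rw [this, integrable_withDensity_iff_integrable_smul
    (measurable_gaussianPDFReal 0 v).real_toNNReal]
  have h := (integrable_rpow_mul_exp_neg_mul_sq hb (s := k)
    (lt_of_lt_of_le (by norm_num) (Nat.cast_nonneg k))).const_mul
    ((Real.sqrt (2 * π * v))⁻¹)
  refine h.congr ?_
  filter_upwards with x
  rw [NNReal.smul_def, Real.coe_toNNReal _ (gaussianPDFReal_nonneg 0 v x), pdf_eq hv',
    Real.rpow_natCast, smul_eq_mul]
  ring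

lemma integral_sq_gaussian (hv : v ≠ 0) :
    ∫ x, x ^ 2 ∂(gaussianReal 0 v) = (v : ℝ) := by
  have hv' : (0:ℝ) < v := lt_of_le_of_ne v.2 (by exact_mod_cast (Ne.symm hv))
  have hb : (0:ℝ) < (2 * (v:ℝ))⁻¹ := by positivity
  rw [integral_gaussian_eq hv]
  have : ∀ x : ℝ, gaussianPDFReal 0 v x * x ^ 2
      = (Real.sqrt (2 * π * v))⁻¹ * (x ^ 2 * Real.exp (-(2 * (v:ℝ))⁻¹ * x ^ 2)) := by
    intro x; rw [pdf_eq hv']; ring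
  simp_rw [this]
  rw [integral_const_mul, integral_sq_exp hb]
  have h1 : π / (2 * (v:ℝ))⁻¹ = 2 * π * v := by field_simp
  have h2 : (2 : ℝ) * (2 * (v:ℝ))⁻¹ = (v:ℝ)⁻¹ := by field_simp
  rw [h1, h2]
  have h3 : Real.sqrt (2 * π * v) ≠ 0 := by
    refine ne_of_gt (Real.sqrt_pos.mpr ?_)
    have := Real.pi_pos; positivity
  field_simp

lemma gaussian_map_neg (hv : v ≠ 0) :
    (gaussianReal 0 v).map (fun x => -x) = gaussianReal 0 v := by
  have h := gaussianReal_map_const_mul (μ := 0) (v := v) (-1)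
  have h1 : (fun x : ℝ => -1 * x) = fun x : ℝ => -x := by ext x; ring
  have h3 : NNReal.mk ((-1:ℝ)^2) (sq_nonneg _) = 1 := by ext; norm_num
  rw [h1, h3, one_mul, mul_zero] at h
  exact h

lemma integral_odd_gaussian (hv : v ≠ 0) (k : ℕ) (hk : Odd k) :
    ∫ x, x ^ k ∂(gaussianReal 0 v) = 0 := by
  have hmap := gaussian_map_neg (v := v) hv
  have h1 : ∫ x, x ^ k ∂(gaussianReal 0 v)
      = ∫ x, (-x) ^ k ∂(gaussianReal 0 v) := by
    conv_lhs => rw [← hmap]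
    rw [integral_map measurable_neg.aemeasurable]
    exact (measurable_id.pow_const k).aestronglyMeasurable
  have h2 : ∀ x : ℝ, (-x) ^ k = -(x ^ k) := fun x => hk.neg_pow x
  simp_rw [h2] at h1
  rw [integral_neg] at h1
  linarith
end STN

lemma STN.expand_sq {ι : Type*} [Fintype ι] (p q : ι → ℝ) (c : ℝ) :
    ∑ i, (p i + c * q i) ^ 2
      = ∑ i, (p i) ^ 2 + 2 * c * (∑ i, p i * q i) + c ^ 2 * (∑ i, (q i) ^ 2) := by
  rw [Finset.mul_sum, Finset.mul_sum, ← Finset.sum_add_distrib, ← Finset.sum_add_distrib]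
  exact Finset.sum_congr rfl fun i _ => by ring

lemma STN.swap_sum {n m : ℕ} (X : Matrix (Fin n) (Fin m) ℝ) (u : Fin n → ℝ) (d : Fin m → ℝ) :
    ∑ i, u i * X.mulVec d i = ∑ j, Xᵀ.mulVec u j * d j := by
  simp only [Matrix.mulVec, dotProduct, Matrix.transpose_apply, Finset.mul_sum,
    Finset.sum_mul]
  rw [Finset.sum_comm]
  exact Finset.sum_congr rfl fun j _ => Finset.sum_congr rfl fun i _ => by ring

/-- Under the STN perturbed training objective for ridge regression, with scalar
Gaussian perturbation `ε ~ N(0, σ²)`, the stationary point in `w₀` is biased: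
the unique minimizer over `w₀` of
`E_ε[(1/2n)‖X(w₀+Θε) − t‖² + ((λ₀+ε)/2n)‖w₀+Θε‖²]`
is `w₀* = (XᵀX + λ₀I)⁻¹(Xᵀt − σ²Θ)`, which differs from the ridge solution
`(XᵀX + λ₀I)⁻¹Xᵀt` whenever `Θ ≠ 0`. -/
theorem stn_objective_biased_fixed_point {n m : ℕ} (hn : 0 < n)
    (X : Matrix (Fin n) (Fin m) ℝ) (t : Fin n → ℝ)
    (lam₀ : ℝ) (hlam : 0 < lam₀)
    (Θ : Fin m → ℝ) (σ : ℝ) (hσ : 0 < σ)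
    (F : (Fin m → ℝ) → ℝ)
    (hF : ∀ w₀, F w₀ = ∫ e,
      ((1 / (2 * n)) * ∑ i, (X.mulVec (w₀ + e • Θ) i - t i) ^ 2
        + ((lam₀ + e) / (2 * n)) * ∑ j, ((w₀ + e • Θ) j) ^ 2)
      ∂(gaussianReal 0 ⟨σ ^ 2, sq_nonneg σ⟩))
    (wstar : Fin m → ℝ)
    (hwstar : wstar = (Xᵀ * X + lam₀ • (1 : Matrix (Fin m) (Fin m) ℝ))⁻¹.mulVec
      (Xᵀ.mulVec t - σ ^ 2 • Θ)) :
    (∀ w₀, w₀ ≠ wstar → F wstar < F w₀) ∧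
    (Θ ≠ 0 → wstar ≠
      (Xᵀ * X + lam₀ • (1 : Matrix (Fin m) (Fin m) ℝ))⁻¹.mulVec (Xᵀ.mulVec t)) := by
  have hσ2 : (0:ℝ) < σ ^ 2 := by positivity
  have hv : (⟨σ ^ 2, sq_nonneg σ⟩ : ℝ≥0) ≠ 0 := by
    intro h
    have h2 : σ ^ 2 = 0 := congrArg NNReal.toReal h
    exact absurd h2 (ne_of_gt hσ2)
  haveI : IsProbabilityMeasure (gaussianReal 0 ⟨σ ^ 2, sq_nonneg σ⟩) :=
    instIsProbabilityMeasureGaussianReal _ _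
  -- moments
  have hi1 : Integrable (fun e : ℝ => e) (gaussianReal 0 ⟨σ ^ 2, sq_nonneg σ⟩) := by
    simpa using STN.integrable_pow_gaussian hv 1
  have hi2 : Integrable (fun e : ℝ => e ^ 2) (gaussianReal 0 ⟨σ ^ 2, sq_nonneg σ⟩) :=
    STN.integrable_pow_gaussian hv 2
  have hi3 : Integrable (fun e : ℝ => e ^ 3) (gaussianReal 0 ⟨σ ^ 2, sq_nonneg σ⟩) :=
    STN.integrable_pow_gaussian hv 3
  have hm1 : ∫ e, e ∂(gaussianReal 0 ⟨σ ^ 2, sq_nonneg σ⟩) = 0 := by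
    simpa using STN.integral_odd_gaussian hv 1 odd_one
  have hm2 : ∫ e, e ^ 2 ∂(gaussianReal 0 ⟨σ ^ 2, sq_nonneg σ⟩) = σ ^ 2 := by
    exact STN.integral_sq_gaussian hv
  have hm3 : ∫ e, e ^ 3 ∂(gaussianReal 0 ⟨σ ^ 2, sq_nonneg σ⟩) = 0 :=
    STN.integral_odd_gaussian hv 3 (by decide)
  have hpoly : ∀ A B C D : ℝ,
      ∫ e, (A + B * e + C * e ^ 2 + D * e ^ 3) ∂(gaussianReal 0 ⟨σ ^ 2, sq_nonneg σ⟩)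
        = A + C * σ ^ 2 := by
    intro A B C D
    have ha1 : Integrable (fun e : ℝ => A + B * e) (gaussianReal 0 ⟨σ ^ 2, sq_nonneg σ⟩) :=
      (integrable_const A).add (hi1.const_mul B)
    have ha2 : Integrable (fun e : ℝ => A + B * e + C * e ^ 2)
        (gaussianReal 0 ⟨σ ^ 2, sq_nonneg σ⟩) := ha1.add (hi2.const_mul C)
    rw [integral_add ha2 (hi3.const_mul D), integral_add ha1 (hi2.const_mul C),
      integral_add (integrable_const A) (hi1.const_mul B),
      integral_const_mul, integral_const_mul, integral_const_mul,
      hm1, hm2, hm3, integral_const]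
    simp [measure_univ]
  -- closed form for F
  have hFH : ∀ w : Fin m → ℝ, F w =
      (1 / (2 * (n:ℝ))) * (∑ i, (X.mulVec w i - t i) ^ 2 + lam₀ * ∑ j, (w j) ^ 2
        + 2 * σ ^ 2 * ∑ j, w j * Θ j)
      + σ ^ 2 * (1 / (2 * (n:ℝ))) * (∑ i, (X.mulVec Θ i) ^ 2 + lam₀ * ∑ j, (Θ j) ^ 2) := by
    intro w
    rw [hF w]
    have hfun : (fun e : ℝ =>
        (1 / (2 * (n:ℝ))) * ∑ i, (X.mulVec (w + e • Θ) i - t i) ^ 2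
          + ((lam₀ + e) / (2 * (n:ℝ))) * ∑ j, ((w + e • Θ) j) ^ 2)
        = fun e : ℝ =>
        ((1 / (2 * (n:ℝ))) * ∑ i, (X.mulVec w i - t i) ^ 2
            + lam₀ / (2 * (n:ℝ)) * ∑ j, (w j) ^ 2)
        + ((1 / (2 * (n:ℝ))) * (2 * ∑ i, (X.mulVec w i - t i) * X.mulVec Θ i)
            + (1 / (2 * (n:ℝ))) * (∑ j, (w j) ^ 2 + 2 * lam₀ * ∑ j, w j * Θ j)) * e
        + ((1 / (2 * (n:ℝ))) * ∑ i, (X.mulVec Θ i) ^ 2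
            + (1 / (2 * (n:ℝ))) * (2 * ∑ j, w j * Θ j + lam₀ * ∑ j, (Θ j) ^ 2)) * e ^ 2
        + ((1 / (2 * (n:ℝ))) * ∑ j, (Θ j) ^ 2) * e ^ 3 := by
      funext e
      have hmv : ∀ i, X.mulVec (w + e • Θ) i = X.mulVec w i + e * X.mulVec Θ i := by
        intro i
        rw [Matrix.mulVec_add, Matrix.mulVec_smul]
        simp [smul_eq_mul]
      simp only [hmv, Pi.add_apply, Pi.smul_apply, smul_eq_mul]
      have h1 : ∑ i, (X.mulVec w i + e * X.mulVec Θ i - t i) ^ 2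
          = ∑ i, ((X.mulVec w i - t i) + e * (X.mulVec Θ i)) ^ 2 :=
        Finset.sum_congr rfl fun i _ => by ring
      rw [h1, STN.expand_sq, STN.expand_sq]
      ring
    rw [hfun, hpoly]
    ring
  -- matrix positivity
  have hpos : (Xᵀ * X + lam₀ • (1 : Matrix (Fin m) (Fin m) ℝ)).PosDef := by
    refine Matrix.PosDef.of_dotProduct_mulVec_pos ?_ ?_
    · have h1 : (Xᵀ * X).IsHermitian := by
        have h0 := Matrix.isHermitian_conjTranspose_mul_self X
        rwa [Matrix.conjTranspose_eq_transpose_of_trivial] at h0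
      have h2 : (lam₀ • (1 : Matrix (Fin m) (Fin m) ℝ)).IsHermitian := by
        unfold Matrix.IsHermitian
        rw [Matrix.conjTranspose_smul, Matrix.conjTranspose_one]
        simp
      exact h1.add h2
    · intro x hx
      obtain ⟨j0, hj0⟩ := Function.ne_iff.mp hx
      have hsum : dotProduct (star x) ((Xᵀ * X + lam₀ • (1 : Matrix (Fin m) (Fin m) ℝ)) *ᵥ x)
          = ∑ i, (X.mulVec x i) ^ 2 + lam₀ * ∑ j, (x j) ^ 2 := by
        rw [star_trivial, Matrix.add_mulVec, dotProduct_add, Matrix.smul_mulVec,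
          Matrix.one_mulVec, ← Matrix.mulVec_mulVec, dotProduct_mulVec,
          Matrix.vecMul_transpose]
        simp only [dotProduct, smul_eq_mul, Finset.mul_sum]
        congr 1
        · exact Finset.sum_congr rfl fun i _ => by ring
        · exact Finset.sum_congr rfl fun i _ => by
            simp only [Pi.smul_apply, smul_eq_mul]; ring
      rw [hsum]
      have h5 : 0 < ∑ j, (x j) ^ 2 :=
        Finset.sum_pos' (fun j _ => sq_nonneg _)
          ⟨j0, Finset.mem_univ _, by
            have hj0' : x j0 ≠ 0 := by simpa using hj0
            positivity⟩
      have h6 : 0 ≤ ∑ i, (X.mulVec x i) ^ 2 := Finset.sum_nonneg fun i _ => sq_nonneg _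
      nlinarith
  have hdet : IsUnit (Xᵀ * X + lam₀ • (1 : Matrix (Fin m) (Fin m) ℝ)).det :=
    isUnit_iff_ne_zero.mpr (ne_of_gt hpos.det_pos)
  have hsolve : ∀ b : Fin m → ℝ,
      (Xᵀ * X + lam₀ • (1 : Matrix (Fin m) (Fin m) ℝ)) *ᵥ
        ((Xᵀ * X + lam₀ • (1 : Matrix (Fin m) (Fin m) ℝ))⁻¹ *ᵥ b) = b := by
    intro b
    rw [Matrix.mulVec_mulVec, Matrix.mul_nonsing_inv _ hdet, Matrix.one_mulVec]
  have hAw : (Xᵀ * X + lam₀ • (1 : Matrix (Fin m) (Fin m) ℝ)) *ᵥ wstar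
      = Xᵀ *ᵥ t - σ ^ 2 • Θ := by
    rw [hwstar]; exact hsolve _
  have key : ∀ j, Xᵀ.mulVec (X.mulVec wstar) j + lam₀ * wstar j + σ ^ 2 * Θ j
      = Xᵀ.mulVec t j := by
    intro j
    have h := congrFun hAw j
    rw [Matrix.add_mulVec, Matrix.smul_mulVec, Matrix.one_mulVec,
      ← Matrix.mulVec_mulVec] at h
    simp only [Pi.add_apply, Pi.sub_apply, Pi.smul_apply, smul_eq_mul] at h
    linarith
  have hHd' : ∀ d : Fin m → ℝ,
      (∑ i, (X.mulVec (wstar + d) i - t i) ^ 2 + lam₀ * ∑ j, ((wstar + d) j) ^ 2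
        + 2 * σ ^ 2 * ∑ j, (wstar + d) j * Θ j)
      = (∑ i, (X.mulVec wstar i - t i) ^ 2 + lam₀ * ∑ j, (wstar j) ^ 2
          + 2 * σ ^ 2 * ∑ j, wstar j * Θ j)
        + (∑ i, (X.mulVec d i) ^ 2 + lam₀ * ∑ j, (d j) ^ 2) := by
    intro d
    have hmv : ∀ i, X.mulVec (wstar + d) i = X.mulVec wstar i + X.mulVec d i := by
      intro i; rw [Matrix.mulVec_add]; simp
    have h1 : ∑ i, (X.mulVec (wstar + d) i - t i) ^ 2
        = ∑ i, ((X.mulVec wstar i - t i) + 1 * (X.mulVec d i)) ^ 2 :=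
      Finset.sum_congr rfl fun i _ => by rw [hmv]; ring
    have h2 : ∑ j, ((wstar + d) j) ^ 2 = ∑ j, (wstar j + 1 * d j) ^ 2 :=
      Finset.sum_congr rfl fun j _ => by simp
    have h3 : ∑ j, (wstar + d) j * Θ j = ∑ j, wstar j * Θ j + ∑ j, d j * Θ j := by
      rw [← Finset.sum_add_distrib]
      exact Finset.sum_congr rfl fun j _ => by simp [Pi.add_apply]; ring
    have hu : Xᵀ.mulVec (fun i => X.mulVec wstar i - t i)
        = fun j => Xᵀ.mulVec (X.mulVec wstar) j - Xᵀ.mulVec t j := by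
      have he : (fun i => X.mulVec wstar i - t i) = X.mulVec wstar - t := rfl
      rw [he, Matrix.mulVec_sub]
      rfl
    have hcross : ∑ i, (X.mulVec wstar i - t i) * X.mulVec d i
        + lam₀ * ∑ j, wstar j * d j + σ ^ 2 * ∑ j, d j * Θ j = 0 := by
      rw [STN.swap_sum, hu, Finset.mul_sum, Finset.mul_sum, ← Finset.sum_add_distrib,
        ← Finset.sum_add_distrib]
      exact Finset.sum_eq_zero fun j _ => by linear_combination d j * key j
    rw [h1, h2, h3, STN.expand_sq, STN.expand_sq]
    linear_combination (2:ℝ) * hcross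
  have hHd : ∀ w : Fin m → ℝ,
      (∑ i, (X.mulVec w i - t i) ^ 2 + lam₀ * ∑ j, (w j) ^ 2
        + 2 * σ ^ 2 * ∑ j, w j * Θ j)
      = (∑ i, (X.mulVec wstar i - t i) ^ 2 + lam₀ * ∑ j, (wstar j) ^ 2
          + 2 * σ ^ 2 * ∑ j, wstar j * Θ j)
        + (∑ i, (X.mulVec (w - wstar) i) ^ 2 + lam₀ * ∑ j, ((w - wstar) j) ^ 2) := by
    intro w
    have h := hHd' (w - wstar)
    rw [show wstar + (w - wstar) = w from by abel] at h
    exact h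
  constructor
  · intro w hw
    rw [hFH w, hFH wstar, hHd w]
    have hd0 : w - wstar ≠ 0 := sub_ne_zero.mpr hw
    obtain ⟨j0, hj0⟩ := Function.ne_iff.mp hd0
    have h5 : 0 < ∑ j, ((w - wstar) j) ^ 2 :=
      Finset.sum_pos' (fun j _ => sq_nonneg _)
        ⟨j0, Finset.mem_univ _, by
          have hj0' : (w - wstar) j0 ≠ 0 := by simpa using hj0
          positivity⟩
    have h6 : 0 ≤ ∑ i, (X.mulVec (w - wstar) i) ^ 2 := Finset.sum_nonneg fun i _ => sq_nonneg _
    have hn' : 0 < 1 / (2 * (n:ℝ)) := by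
      have : (0:ℝ) < n := by exact_mod_cast hn
      positivity
    nlinarith [mul_pos hn' (by nlinarith : (0:ℝ) < ∑ i, (X.mulVec (w - wstar) i) ^ 2
      + lam₀ * ∑ j, ((w - wstar) j) ^ 2)]
  · intro hΘ heq
    have h7 := hsolve (Xᵀ.mulVec t)
    rw [← heq, hAw] at h7
    have h8 : σ ^ 2 • Θ = 0 := sub_eq_self.mp h7
    rcases smul_eq_zero.mp h8 with h | h
    · exact absurd h (ne_of_gt hσ2)
    · exact hΘ h
end

section
/- One gradient descent step on the uncentered STN hypernetwork slope: if Φ⁽¹⁾ = Φ⁽⁰⁾ − α (∇_w L_T(λ⁽⁰⁾, w⁽⁰⁾)) (λ⁽⁰⁾)ᵀ where w⁽⁰⁾ = Φ⁽⁰⁾λ⁽⁰⁾ + φ₀, then for any λ and any differentiable L_V, the gradient of λ ↦ L_V(r_{Φ⁽¹⁾,φ₀}(λ)) equals (Φ⁽⁰⁾)ᵀ∇_w L_V(w⁽¹⁾) − α·⟨∇_w L_T(λ⁽⁰⁾, w⁽⁰⁾), ∇_w L_V(w⁽¹⁾)⟩ · λ⁽⁰⁾, evaluated with w⁽¹⁾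 = Φ⁽¹⁾λ + φ₀. -/
open Matrix

/-- One gradient descent step on the uncentered STN hypernetwork slope:
if `Φ⁽¹⁾ = Φ⁽⁰⁾ − α gT (λ⁽⁰⁾)ᵀ` where `gT = ∇_w L_T(λ⁽⁰⁾, w⁽⁰⁾)` with
`w⁽⁰⁾ = Φ⁽⁰⁾λ⁽⁰⁾ + φ₀`, then for any `λ` the gradient of
`λ ↦ L_V(Φ⁽¹⁾λ + φ₀)` equals
`(Φ⁽⁰⁾)ᵀ gV − α ⟨gT, gV⟩ λ⁽⁰⁾` where `gV = ∇_w L_V(w⁽¹⁾)`, `w⁽¹⁾ = Φ⁽¹⁾λ + φ₀`. -/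
theorem uncentered_stn_hyperparameter_gradient {m h : ℕ}
    (Φ₀ : Matrix (Fin m) (Fin h) ℝ) (φ₀ : Fin m → ℝ)
    (lam₀ lam : Fin h → ℝ) (α : ℝ) (hα : 0 < α)
    (gT : Fin m → ℝ)
    (LV : (Fin m → ℝ) → ℝ)
    (Φ₁ : Matrix (Fin m) (Fin h) ℝ)
    (hΦ₁ : Φ₁ = Φ₀ - α • Matrix.vecMulVec gT lam₀)
    (w₁ : Fin m → ℝ) (hw₁ : w₁ = Φ₁.mulVec lam + φ₀)
    (hLV : DifferentiableAt ℝ LV w₁)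
    (gV : Fin m → ℝ) (hgV : ∀ i, gV i = fderiv ℝ LV w₁ (Pi.single i 1)) :
    (fun j => fderiv ℝ (fun l => LV (Φ₁.mulVec l + φ₀)) lam (Pi.single j 1)) =
      Φ₀ᵀ.mulVec gV - (α * (gT ⬝ᵥ gV)) • lam₀ := by
  set A : (Fin h → ℝ) →L[ℝ] (Fin m → ℝ) :=
    LinearMap.toContinuousLinearMap (Matrix.mulVecLin Φ₁) with hA
  have hDaff : HasFDerivAt (fun l => Φ₁.mulVec l + φ₀) A lam := by
    simpa [hA] using (A.hasFDerivAt (x := lam)).add_const φ₀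
  have hchain : HasFDerivAt (fun l => LV (Φ₁.mulVec l + φ₀))
      ((fderiv ℝ LV w₁).comp A) lam := by
    refine HasFDerivAt.comp lam ?_ hDaff
    rw [hw₁] at hLV ⊢
    exact hLV.hasFDerivAt
  have hfd : fderiv ℝ (fun l => LV (Φ₁.mulVec l + φ₀)) lam = (fderiv ℝ LV w₁).comp A :=
    hchain.fderiv
  have hD : ∀ v : Fin m → ℝ, fderiv ℝ LV w₁ v = ∑ i, v i * gV i := by
    intro v
    have hv : v = ∑ i, v i • (Pi.single i 1 : Fin m → ℝ) := by
      ext i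
      simp [Finset.sum_apply, Pi.single_apply]
    conv_lhs => rw [hv]
    rw [map_sum]
    simp [hgV, mul_comm]
  funext j
  rw [hfd]
  have : A (Pi.single j 1) = fun i => Φ₁ i j := by
    ext i
    simp [hA, Matrix.mulVec_single]
  simp only [ContinuousLinearMap.comp_apply, this, hD]
  subst hΦ₁
  simp only [Matrix.sub_apply, Matrix.smul_apply, Matrix.vecMulVec_apply, smul_eq_mul,
    Pi.sub_apply, Matrix.mulVec, dotProduct, Matrix.transpose_apply, Pi.smul_apply,
    smul_eq_mul, sub_mul]
  rw [Finset.sum_sub_distrib]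
  congr 1
  rw [mul_comm, Finset.mul_sum, Finset.mul_sum]
  exact Finset.sum_congr rfl fun i _ => by ring
end

section
/- For a Gaussian random vector ε ~ N(0, Σ) with Σ positive definite and a continuously differentiable function g: ℝ^h → ℝ^m with E[‖∇g(ε)‖] < ∞, Stein's identity holds componentwise: E[g(ε) εᵀ] = E[J_g(ε)] Σ, where J_g is the Jacobian of g. -/
open Matrix MeasureTheory

/-- Stein's identity: for a Gaussian random vector `ε ~ N(0, Σ)` on `ℝ^h`
(defined by its density with respect to Lebesgue measure) with `Σ` positive
definite, and a `C¹` function `g : ℝ^h → ℝ^m` whose relevant expectations exist,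
`E[g(ε) εᵀ] = E[J_g(ε)] Σ` entrywise, where `J_g` is the Jacobian of `g`. -/
theorem stein_identity {h m : ℕ}
    (S : Matrix (Fin h) (Fin h) ℝ) (hS : S.PosDef)
    (μ : Measure (Fin h → ℝ))
    (hμ : μ = volume.withDensity fun x => ENNReal.ofReal
      (Real.exp (-(1 / 2) * (x ⬝ᵥ S⁻¹.mulVec x)) /
        Real.sqrt ((2 * Real.pi) ^ h * S.det)))
    (g : (Fin h → ℝ) → (Fin m → ℝ)) (hg : ContDiff ℝ 1 g)
    (hint₁ : ∀ (i : Fin m) (j : Fin h), Integrable (fun x => g x i * x j) μ)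
    (hint₂ : ∀ (i : Fin m) (k : Fin h),
      Integrable (fun x => fderiv ℝ (fun y => g y i) x (Pi.single k 1)) μ) :
    ∀ (i : Fin m) (j : Fin h),
      ∫ x, g x i * x j ∂μ =
        ∑ k, (∫ x, fderiv ℝ (fun y => g y i) x (Pi.single k 1) ∂μ) * S k j := by
  classical
  intro i j
  set A := S⁻¹ with hAdef
  have hApos : A.PosDef := hS.inv
  have hSsymm : Sᵀ = S := by
    have := hS.isHermitian
    simpa [Matrix.IsHermitian, Matrix.conjTranspose_eq_transpose_of_trivial] using this
  have hAsymm : Aᵀ = A := by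
    rw [hAdef, Matrix.transpose_nonsing_inv, hSsymm]
  set q : (Fin h → ℝ) → ℝ := fun x => x ⬝ᵥ A.mulVec x with hqdef
  set Z : ℝ := Real.sqrt ((2 * Real.pi) ^ h * S.det) with hZdef
  have hZpos : 0 < Z := Real.sqrt_pos.2 (mul_pos (pow_pos (mul_pos two_pos Real.pi_pos) h) hS.det_pos)
  set ρ : (Fin h → ℝ) → ℝ := fun x => Real.exp (-(1 / 2) * q x) / Z with hρdef
  have hρpos : ∀ x, 0 < ρ x := fun x => div_pos (Real.exp_pos _) hZpos
  have hswap : ∀ x v : Fin h → ℝ, x ⬝ᵥ A.mulVec v = v ⬝ᵥ A.mulVec x := by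
    intro x v
    rw [Matrix.dotProduct_mulVec, ← Matrix.mulVec_transpose, hAsymm, dotProduct_comm]
  have hqcont : Continuous q := by
    have hq' : q = fun x => ∑ a, x a * ∑ b, A a b * x b := by
      funext x; simp [hqdef, dotProduct, Matrix.mulVec]
    rw [hq']
    exact continuous_finset_sum _ fun a _ => (continuous_apply a).mul
      (continuous_finset_sum _ fun b _ => continuous_const.mul (continuous_apply b))
  have hρcont : Continuous ρ :=
    (Real.continuous_exp.comp (continuous_const.mul hqcont)).div_const Z
  -- coercivity of the quadratic form
  have hsumc : Continuous fun x : Fin h → ℝ => ∑ i, x i ^ 2 :=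
    continuous_finset_sum _ fun i _ => (continuous_apply i).pow 2
  have hcoer : ∃ c : ℝ, 0 < c ∧ ∀ x, c * (∑ i, x i ^ 2) ≤ q x := by
    rcases Nat.eq_zero_or_pos h with hh | hh
    · refine ⟨1, one_pos, fun x => ?_⟩
      have : Finset.univ (α := Fin h) = ∅ := by
        subst hh; rfl
      simp [hqdef, dotProduct, this]
    · set sph : Set (Fin h → ℝ) := {x | ∑ i, x i ^ 2 = 1} with hsph
      have hclosed : IsClosed sph := isClosed_eq hsumc continuous_const
      have hbdd : Bornology.IsBounded sph := by
        rw [Metric.isBounded_iff_subset_closedBall 0]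
        refine ⟨1, fun x hx => ?_⟩
        rw [Metric.mem_closedBall, dist_zero_right]
        rw [pi_norm_le_iff_of_nonneg zero_le_one]
        intro b
        rw [Real.norm_eq_abs, abs_le_one_iff_mul_self_le_one, ← sq]
        calc x b ^ 2 ≤ ∑ i, x i ^ 2 :=
              Finset.single_le_sum (fun i _ => sq_nonneg (x i)) (Finset.mem_univ b)
          _ = 1 := hx
      have hne : sph.Nonempty := by
        refine ⟨Pi.single ⟨0, hh⟩ 1, ?_⟩
        simp [hsph, Pi.single_apply, Finset.sum_ite_eq']
      obtain ⟨x₀, hx₀s, hx₀min⟩ :=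
        (Metric.isCompact_of_isClosed_isBounded hclosed hbdd).exists_isMinOn hne
          hqcont.continuousOn
      have hx₀ne : x₀ ≠ 0 := by
        intro h0
        rw [h0] at hx₀s
        simp [hsph] at hx₀s
      have hc : 0 < q x₀ := by
        have := hApos.dotProduct_mulVec_pos hx₀ne
        simpa [hqdef] using this
      refine ⟨q x₀, hc, fun x => ?_⟩
      rcases eq_or_ne x 0 with rfl | hx
      · simp [hqdef]
      · have hsumpos : 0 < ∑ i, x i ^ 2 := by
          obtain ⟨b, hb⟩ := Function.ne_iff.1 hx
          refine Finset.sum_pos' (fun i _ => sq_nonneg _) ⟨b, Finset.mem_univ b, ?_⟩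
          simpa using pow_pos (abs_pos.2 hb) 2 |>.trans_eq (sq_abs (x b))
        set r : ℝ := Real.sqrt (∑ i, x i ^ 2) with hr
        have hrpos : 0 < r := Real.sqrt_pos.2 hsumpos
        have hr2 : r ^ 2 = ∑ i, x i ^ 2 := Real.sq_sqrt hsumpos.le
        have hy : (r⁻¹ • x) ∈ sph := by
          have : ∑ i, (r⁻¹ • x) i ^ 2 = r⁻¹ ^ 2 * ∑ i, x i ^ 2 := by
            rw [Finset.mul_sum]
            refine Finset.sum_congr rfl fun i _ => ?_
            simp [Pi.smul_apply, smul_eq_mul, mul_pow]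
          simp only [hsph, Set.mem_setOf_eq, this, hr2.symm]
          field_simp
        have h1 : q x₀ ≤ q (r⁻¹ • x) := hx₀min hy
        have h2 : q (r⁻¹ • x) = r⁻¹ ^ 2 * q x := by
          simp only [hqdef, Matrix.mulVec_smul, smul_dotProduct, dotProduct_smul,
            smul_eq_mul]
          ring
        rw [h2] at h1
        have h3 : q x₀ * r ^ 2 ≤ q x := by
          have := mul_le_mul_of_nonneg_right h1 (sq_nonneg r)
          calc q x₀ * r ^ 2 ≤ r⁻¹ ^ 2 * q x * r ^ 2 := this
            _ = q x := by field_simp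
        rw [← hr2]
        linarith
  obtain ⟨c, hcpos, hcoer⟩ := hcoer
  -- integrability of the density
  have hρint : Integrable ρ (volume : Measure (Fin h → ℝ)) := by
    have hb : Integrable
        (fun x : Fin h → ℝ => (1 / Z) * ∏ i, Real.exp (-(c / 2) * x i ^ 2)) volume := by
      refine Integrable.const_mul ?_ _
      exact Integrable.fintype_prod (f := fun _ : Fin h => fun t : ℝ => Real.exp (-(c / 2) * t ^ 2))
        fun i => by simpa using integrable_exp_neg_mul_sq (half_pos hcpos)
    refine hb.mono' hρcont.aestronglyMeasurable (ae_of_all _ fun x => ?_)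
    rw [Real.norm_eq_abs, abs_of_pos (hρpos x)]
    have hprod : ∏ i, Real.exp (-(c / 2) * x i ^ 2)
        = Real.exp (-(c / 2) * ∑ i, x i ^ 2) := by
      rw [← Real.exp_sum, ← Finset.mul_sum]
    have hle : Real.exp (-(1 / 2) * q x) ≤ Real.exp (-(c / 2) * ∑ i, x i ^ 2) := by
      apply Real.exp_le_exp.2
      have := hcoer x
      nlinarith
    rw [hprod, hρdef]
    calc Real.exp (-(1 / 2) * q x) / Z ≤ Real.exp (-(c / 2) * ∑ i, x i ^ 2) / Z := by
          gcongr
      _ = 1 / Z * Real.exp (-(c / 2) * ∑ i, x i ^ 2) := by ring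
  have hρmeas : Measurable ρ := hρcont.measurable
  have hμ' : μ = volume.withDensity fun x => ENNReal.ofReal (ρ x) := by
    rw [hμ]
  -- transfer of integrability and integrals
  have hiff : ∀ φ : (Fin h → ℝ) → ℝ,
      Integrable φ μ ↔ Integrable (fun x => φ x * ρ x) volume := by
    intro φ
    rw [hμ', integrable_withDensity_iff (f := fun x => ENNReal.ofReal (ρ x))
      hρmeas.ennreal_ofReal (ae_of_all _ fun x => ENNReal.ofReal_lt_top)]
    constructor
    · intro H
      refine H.congr (ae_of_all _ fun x => ?_)
      simp [ENNReal.toReal_ofReal (hρpos x).le]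
    · intro H
      refine H.congr (ae_of_all _ fun x => ?_)
      simp [ENNReal.toReal_ofReal (hρpos x).le]
  have hInteq : ∀ φ : (Fin h → ℝ) → ℝ, ∫ x, φ x ∂μ = ∫ x, φ x * ρ x := by
    intro φ
    have hμ'' : μ = volume.withDensity fun x => ((ρ x).toNNReal : ENNReal) := hμ'
    rw [hμ'', integral_withDensity_eq_integral_smul hρmeas.real_toNNReal φ]
    refine integral_congr_ae (ae_of_all _ fun x => ?_)
    simp [NNReal.smul_def, Real.coe_toNNReal _ (hρpos x).le, mul_comm]
  have hfin : IsFiniteMeasure μ := by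
    constructor
    rw [hμ', withDensity_apply _ MeasurableSet.univ, Measure.restrict_univ]
    have := hρint.hasFiniteIntegral
    rwa [hasFiniteIntegral_iff_ofReal (ae_of_all _ fun x => (hρpos x).le)] at this
  -- integrability of g · i with respect to μ
  have hgcont : Continuous fun x => g x i := (continuous_apply i).comp hg.continuous
  have hgiμ : Integrable (fun x => g x i) μ := by
    obtain ⟨M, hM⟩ := (isCompact_closedBall (0 : Fin h → ℝ) 1).exists_bound_of_continuousOn
      hgcont.continuousOn
    have hMnn : 0 ≤ M := le_trans (norm_nonneg _) (hM 0 (Metric.mem_closedBall_self zero_le_one))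
    refine ((integrable_const M).add
      (integrable_finset_sum Finset.univ fun l _ => (hint₁ i l).norm)).mono'
      hgcont.aestronglyMeasurable (ae_of_all _ fun x => ?_)
    by_cases hx : x ∈ Metric.closedBall (0 : Fin h → ℝ) 1
    · exact (hM x hx).trans (le_add_of_nonneg_right
        (Finset.sum_nonneg fun l _ => norm_nonneg _))
    · obtain ⟨l, hl⟩ : ∃ l, 1 < |x l| := by
        by_contra hcon
        push_neg at hcon
        refine hx ?_
        rw [Metric.mem_closedBall, dist_zero_right]
        rw [pi_norm_le_iff_of_nonneg zero_le_one]
        intro b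
        simpa [Real.norm_eq_abs] using hcon b
      calc ‖g x i‖ ≤ ‖g x i‖ * |x l| := le_mul_of_one_le_right (norm_nonneg _) hl.le
        _ = ‖g x i * x l‖ := by rw [norm_mul, Real.norm_eq_abs, Real.norm_eq_abs]
        _ ≤ ∑ l', ‖g x i * x l'‖ :=
            Finset.single_le_sum (f := fun l' => ‖g x i * x l'‖)
              (fun _ _ => norm_nonneg _) (Finset.mem_univ l)
        _ ≤ M + ∑ l', ‖g x i * x l'‖ := le_add_of_nonneg_left hMnn
  have hA3 : Integrable (fun x => g x i * ρ x) volume := (hiff _).1 hgiμ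
  have hA1 : ∀ l, Integrable (fun x => g x i * x l * ρ x) volume :=
    fun l => (hiff _).1 (hint₁ i l)
  have hA2 : ∀ k, Integrable
      (fun x => fderiv ℝ (fun y => g y i) x (Pi.single k 1) * ρ x) volume :=
    fun k => (hiff _).1 (hint₂ i k)
  have hA4 : ∀ k, Integrable (fun x => g x i * A.mulVec x k * ρ x) volume := by
    intro k
    have hrw : (fun x : Fin h → ℝ => g x i * A.mulVec x k * ρ x)
        = fun x => ∑ l, A k l * (g x i * x l * ρ x) := by
      funext x
      have hmv : A.mulVec x k = ∑ l, A k l * x l := rfl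
      rw [hmv, Finset.mul_sum, Finset.sum_mul]
      exact Finset.sum_congr rfl fun l _ => by ring
    rw [hrw]
    exact integrable_finset_sum _ fun l _ => (hA1 l).const_mul _
  -- line derivative of the density
  have hqexp : ∀ (x : Fin h → ℝ) (k : Fin h) (t : ℝ),
      q (x + t • (Pi.single k 1 : Fin h → ℝ)) = q x + (2 * A.mulVec x k) * t + A k k * t ^ 2 := by
    intro x k t
    have h1 : x ⬝ᵥ A.mulVec (Pi.single k 1) = A.mulVec x k := by
      rw [hswap]
      simp [single_dotProduct]
    have h2 : (Pi.single k 1 : Fin h → ℝ) ⬝ᵥ A.mulVec x = A.mulVec x k := by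
      simp [single_dotProduct]
    have h3 : (Pi.single k 1 : Fin h → ℝ) ⬝ᵥ A.mulVec (Pi.single k 1 : Fin h → ℝ)
        = A k k := by
      simp [single_dotProduct, Matrix.mulVec, dotProduct, Pi.single_apply,
        mul_ite, ite_mul, Finset.sum_ite_eq']
    show (x + t • (Pi.single k 1 : Fin h → ℝ)) ⬝ᵥ
      A.mulVec (x + t • (Pi.single k 1 : Fin h → ℝ)) = _
    simp only [Matrix.mulVec_add, Matrix.mulVec_smul, dotProduct_add, add_dotProduct,
      dotProduct_smul, smul_dotProduct, smul_eq_mul, h1, h2, h3]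
    ring
  have hρline : ∀ (x : Fin h → ℝ) (k : Fin h),
      HasLineDerivAt ℝ ρ (-(A.mulVec x k) * ρ x) x (Pi.single k 1) := by
    intro x k
    have heq : (fun t : ℝ => ρ (x + t • (Pi.single k 1 : Fin h → ℝ)))
        = fun t => Real.exp (-(1 / 2) * (q x + (2 * A.mulVec x k) * t + A k k * t ^ 2)) / Z := by
      funext t
      rw [hρdef]
      simp only
      rw [hqexp x k t]
    have hpoly : HasDerivAt
        (fun t : ℝ => -(1 / 2) * (q x + (2 * A.mulVec x k) * t + A k k * t ^ 2))
        (-(A.mulVec x k)) 0 := by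
      have h0 : HasDerivAt (fun t : ℝ => q x + (2 * A.mulVec x k) * t + A k k * t ^ 2)
          (2 * A.mulVec x k) 0 := by
        have ha := ((hasDerivAt_id (0 : ℝ)).const_mul (2 * A.mulVec x k)).const_add (q x)
        have hb := (hasDerivAt_pow 2 (0 : ℝ)).const_mul (A k k)
        have hab := ha.add hb
        convert hab using 1
        · rfl
        · rfl
        · rfl
        simp
      have h1 := h0.const_mul (-(1 / 2) : ℝ)
      convert h1 using 1
      · rfl
      · rfl
      ring
    have hder := (hpoly.exp).div_const Z
    show HasDerivAt (fun t : ℝ => ρ (x + t • (Pi.single k 1 : Fin h → ℝ)))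
      (-(A.mulVec x k) * ρ x) 0
    rw [heq]
    convert hder using 1
    · rfl
    · rfl
    rw [hρdef]
    simp only
    rw [show (q x + (2 * A.mulVec x k) * 0 + A k k * 0 ^ 2) = q x by ring]
    ring
  have hgdiff : Differentiable ℝ fun y => g y i := (contDiff_pi.1 hg i).differentiable (by norm_num)
  -- integration by parts
  have ibp : ∀ k : Fin h,
      ∫ x, g x i * A.mulVec x k * ρ x
        = ∫ x, fderiv ℝ (fun y => g y i) x (Pi.single k 1) * ρ x := by
    intro k
    have hfg' : Integrable (fun x => g x i * (-(A.mulVec x k) * ρ x)) volume := by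
      have hrw : (fun x : Fin h → ℝ => g x i * (-(A.mulVec x k) * ρ x))
          = fun x => -(g x i * A.mulVec x k * ρ x) := by
        funext x; ring
      rw [hrw]; exact (hA4 k).neg
    have key : ∫ x, g x i * (-(A.mulVec x k) * ρ x)
        = - ∫ x, fderiv ℝ (fun y => g y i) x (Pi.single k 1) * ρ x := by
      have H := integral_bilinear_hasLineDerivAt_right_eq_neg_left_of_integrable
        (μ := (volume : Measure (Fin h → ℝ))) (B := ContinuousLinearMap.mul ℝ ℝ)
        (f := fun x => g x i) (g := ρ)
        (f' := fun x => fderiv ℝ (fun y => g y i) x (Pi.single k 1))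
        (g' := fun x => -(A.mulVec x k) * ρ x) (v := (Pi.single k 1 : Fin h → ℝ))
        (by simpa using hA2 k) (by simpa using hfg') (by simpa using hA3)
        (fun x _ => ((hgdiff x).hasFDerivAt.hasLineDerivAt _)) (fun x _ => hρline x k)
      simpa using H
    have hneg : (fun x : Fin h → ℝ => g x i * A.mulVec x k * ρ x)
        = fun x => -(g x i * (-(A.mulVec x k) * ρ x)) := by
      funext x; simp only [neg_mul, mul_neg, neg_neg, mul_assoc]
    rw [hneg, integral_neg, key, neg_neg]
  -- final computation
  have hSA : S * A = 1 := Matrix.mul_nonsing_inv S (isUnit_iff_ne_zero.2 hS.det_pos.ne')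
  have hxj : ∀ x : Fin h → ℝ, x j = ∑ k, A.mulVec x k * S k j := by
    intro x
    have h1 : ∑ k, A.mulVec x k * S k j = (Sᵀ *ᵥ (A *ᵥ x)) j := by
      rw [Matrix.mulVec_transpose]
      simp [Matrix.vecMul, dotProduct]
    rw [h1, hSsymm, Matrix.mulVec_mulVec, hSA, Matrix.one_mulVec]
  calc ∫ x, g x i * x j ∂μ = ∫ x, g x i * x j * ρ x := hInteq _
    _ = ∫ x, ∑ k, g x i * A.mulVec x k * ρ x * S k j := by
        refine integral_congr_ae (ae_of_all _ fun x => ?_)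
        show g x i * x j * ρ x = ∑ k, g x i * A.mulVec x k * ρ x * S k j
        rw [hxj x, Finset.mul_sum, Finset.sum_mul]
        exact Finset.sum_congr rfl fun k _ => by ring
    _ = ∑ k, ∫ x, g x i * A.mulVec x k * ρ x * S k j :=
        integral_finset_sum _ fun k _ => (hA4 k).mul_const _
    _ = ∑ k, (∫ x, g x i * A.mulVec x k * ρ x) * S k j := by
        refine Finset.sum_congr rfl fun k _ => ?_
        rw [integral_mul_const]
    _ = ∑ k, (∫ x, fderiv ℝ (fun y => g y i) x (Pi.single k 1) * ρ x) * S k j := by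
        refine Finset.sum_congr rfl fun k _ => ?_
        rw [ibp k]
    _ = ∑ k, (∫ x, fderiv ℝ (fun y => g y i) x (Pi.single k 1) ∂μ) * S k j := by
        refine Finset.sum_congr rfl fun k _ => ?_
        rw [hInteq]
end

section
/- Linear regression with input dropout is equivalent in expectation to a form of ridge regression: if R ∈ ℝ^{n×m} has i.i.d. Bernoulli(p) entries and L(w) = E_R[(1/2n)‖(R ⊙ X)w − t‖²], then L(w) = (1/2n)‖pXw − t‖² + (p(1−p)/2n) wᵀ diag(XᵀX) w, where diag(XᵀX) is the diagonal matrix of column squared norms of X. -/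
open Matrix MeasureTheory

lemma dropout_dirac_integrable {α E : Type*} [MeasurableSpace α] [MeasurableSingletonClass α] [NormedAddCommGroup E]
    (f : α → E) (a : α) : Integrable f (Measure.dirac a) :=
  (integrable_const (f a)).congr (ae_eq_dirac f).symm

lemma dropout_bern_integrable {p : ℝ} (f : ℝ → ℝ) :
    Integrable f (ENNReal.ofReal p • Measure.dirac 1
      + ENNReal.ofReal (1 - p) • Measure.dirac 0) :=
  ((dropout_dirac_integrable f 1).smul_measure ENNReal.ofReal_ne_top).add_measure
    ((dropout_dirac_integrable f 0).smul_measure ENNReal.ofReal_ne_top)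

lemma dropout_bern_integral {p : ℝ} (hp0 : 0 ≤ p) (hp1 : p ≤ 1) (f : ℝ → ℝ) :
    ∫ x, f x ∂(ENNReal.ofReal p • Measure.dirac 1
      + ENNReal.ofReal (1 - p) • Measure.dirac 0) = p * f 1 + (1 - p) * f 0 := by
  rw [integral_add_measure ((dropout_dirac_integrable f 1).smul_measure ENNReal.ofReal_ne_top)
      ((dropout_dirac_integrable f 0).smul_measure ENNReal.ofReal_ne_top),
    integral_smul_measure, integral_smul_measure, integral_dirac, integral_dirac,
    ENNReal.toReal_ofReal hp0, ENNReal.toReal_ofReal (by linarith)]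
  simp [smul_eq_mul]

lemma dropout_bern_prob {p : ℝ} (hp0 : 0 ≤ p) (hp1 : p ≤ 1) :
    IsProbabilityMeasure (ENNReal.ofReal p • Measure.dirac (1:ℝ)
      + ENNReal.ofReal (1 - p) • Measure.dirac 0) := by
  constructor
  simp only [Measure.coe_add, Measure.coe_smul, Pi.add_apply, Pi.smul_apply,
    Measure.dirac_apply_of_mem (Set.mem_univ _), smul_eq_mul, mul_one]
  rw [← ENNReal.ofReal_add hp0 (by linarith)]
  norm_num

section
variable {ι : Type*} [Fintype ι] [DecidableEq ι] {ν : Measure ℝ} [IsProbabilityMeasure ν]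
  {p : ℝ}

lemma dropout_integrable_eval (hint : ∀ f : ℝ → ℝ, Integrable f ν) (c : ι) :
    Integrable (fun r : ι → ℝ => r c) (Measure.pi fun _ => ν) := by
  letI : MeasureSpace ℝ := ⟨ν⟩
  have h : (fun r : ι → ℝ => r c)
      = fun r => ∏ d, (fun (d : ι) (x : ℝ) => if d = c then x else (1:ℝ)) d (r d) := by
    funext r; simp [Finset.prod_ite_eq']
  rw [h]
  exact Integrable.fintype_prod (f := fun (d : ι) (x : ℝ) => if d = c then x else (1:ℝ))
    fun d => hint _

lemma dropout_integrable_mul (hint : ∀ f : ℝ → ℝ, Integrable f ν) (c c' : ι) :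
    Integrable (fun r : ι → ℝ => r c * r c') (Measure.pi fun _ => ν) := by
  letI : MeasureSpace ℝ := ⟨ν⟩
  have h : (fun r : ι → ℝ => r c * r c')
      = fun r => ∏ d, (fun (d : ι) (x : ℝ) =>
          (if d = c then x else (1:ℝ)) * (if d = c' then x else 1)) d (r d) := by
    funext r; rw [Finset.prod_mul_distrib]; simp [Finset.prod_ite_eq']
  rw [h]
  exact Integrable.fintype_prod (f := fun (d : ι) (x : ℝ) =>
      (if d = c then x else (1:ℝ)) * (if d = c' then x else 1)) fun d => hint _

lemma dropout_integral_eval (hm1 : ∫ x, x ∂ν = p) (c : ι) :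
    ∫ r : ι → ℝ, r c ∂(Measure.pi fun _ => ν) = p := by
  letI : MeasureSpace ℝ := ⟨ν⟩
  have h : (fun r : ι → ℝ => r c)
      = fun r => ∏ d, (fun (d : ι) (x : ℝ) => if d = c then x else (1:ℝ)) d (r d) := by
    funext r; simp [Finset.prod_ite_eq']
  rw [h]
  rw [show (Measure.pi fun _ : ι => ν) = (volume : Measure (ι → ℝ)) from rfl]
  erw [integral_fintype_prod_eq_prod (μ := fun _ => (volume : Measure ℝ)) (fun (d : ι) (x : ℝ) => if d = c then x else (1:ℝ))]
  have h2 : ∀ d : ι, (∫ x : ℝ, if d = c then x else (1:ℝ)) = if d = c then p else 1 := by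
    intro d
    by_cases hd : d = c
    · simp only [hd, if_pos rfl]; exact hm1
    · simp [hd]
  simp_rw [h2]
  simp [Finset.prod_ite_eq']

lemma dropout_integral_mul (hm1 : ∫ x, x ∂ν = p) (hm2 : ∫ x, x * x ∂ν = p) (c c' : ι) :
    ∫ r : ι → ℝ, r c * r c' ∂(Measure.pi fun _ => ν)
      = if c = c' then p else p * p := by
  letI : MeasureSpace ℝ := ⟨ν⟩
  have h : (fun r : ι → ℝ => r c * r c')
      = fun r => ∏ d, (fun (d : ι) (x : ℝ) =>
          (if d = c then x else (1:ℝ)) * (if d = c' then x else 1)) d (r d) := by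
    funext r; rw [Finset.prod_mul_distrib]; simp [Finset.prod_ite_eq']
  rw [h]
  rw [show (Measure.pi fun _ : ι => ν) = (volume : Measure (ι → ℝ)) from rfl]
  erw [integral_fintype_prod_eq_prod (μ := fun _ => (volume : Measure ℝ)) (fun (d : ι) (x : ℝ) =>
      (if d = c then x else (1:ℝ)) * (if d = c' then x else 1))]
  by_cases hcc : c = c'
  · subst hcc
    have h2 : ∀ d : ι, (∫ x : ℝ, (if d = c then x else (1:ℝ)) * (if d = c then x else 1))
        = if d = c then p else 1 := by
      intro d
      by_cases hd : d = c
      · simp only [hd, if_pos rfl]; exact hm2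
      · simp [hd]
    simp_rw [h2]
    simp [Finset.prod_ite_eq']
  · have h2 : ∀ d : ι, (∫ x : ℝ, (if d = c then x else (1:ℝ)) * (if d = c' then x else 1))
        = (if d = c then p else 1) * (if d = c' then p else 1) := by
      intro d
      by_cases h1 : d = c
      · have h2' : d ≠ c' := fun h => hcc (h1 ▸ h ▸ rfl)
        simp only [if_pos h1, if_neg h2', mul_one]
        exact hm1
      · by_cases h2' : d = c'
        · simp only [if_neg h1, if_pos h2', one_mul]
          exact hm1
        · simp [h1, h2']
    simp_rw [h2]
    rw [Finset.prod_mul_distrib]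
    simp [Finset.prod_ite_eq', hcc]
end


/-- Linear regression with input dropout is, in expectation, a form of ridge
regression: if `R` has i.i.d. Bernoulli(p) entries (each entry is `1` with
probability `p` and `0` otherwise), then
`E_R[(1/2n)‖(R ⊙ X)w − t‖²] = (1/2n)‖pXw − t‖² + (p(1−p)/2n) wᵀ diag(XᵀX) w`. -/
theorem dropout_expected_loss_eq_ridge {n m : ℕ} (hn : 0 < n)
    (X : Matrix (Fin n) (Fin m) ℝ) (t : Fin n → ℝ)
    (p : ℝ) (hp0 : 0 ≤ p) (hp1 : p ≤ 1)
    (ν : Measure ℝ)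
    (hν : ν = ENNReal.ofReal p • Measure.dirac 1
      + ENNReal.ofReal (1 - p) • Measure.dirac 0)
    (μ : Measure (Fin n × Fin m → ℝ))
    (hμ : μ = Measure.pi fun _ => ν)
    (L : (Fin m → ℝ) → ℝ)
    (hL : ∀ w, L w = ∫ r,
      (1 / (2 * n)) * ∑ i, ((∑ j, r (i, j) * X i j * w j) - t i) ^ 2 ∂μ) :
    ∀ w, L w =
      (1 / (2 * n)) * (∑ i, (p * X.mulVec w i - t i) ^ 2)
        + (p * (1 - p) / (2 * n)) * ∑ j, (Xᵀ * X) j j * (w j) ^ 2 := by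
  intro w
  haveI hprob : IsProbabilityMeasure ν := hν ▸ dropout_bern_prob hp0 hp1
  have hint : ∀ f : ℝ → ℝ, Integrable f ν := fun f => hν ▸ dropout_bern_integrable f
  have hm1 : ∫ x, x ∂ν = p := by
    rw [hν, dropout_bern_integral hp0 hp1]; ring
  have hm2 : ∫ x, x * x ∂ν = p := by
    rw [hν, dropout_bern_integral hp0 hp1]; ring
  subst hμ
  haveI : IsProbabilityMeasure (Measure.pi fun _ : Fin n × Fin m => ν) := by infer_instance
  -- pointwise algebraic expansion of the squared residual
  have hrew : ∀ (i : Fin n) (r : Fin n × Fin m → ℝ),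
      ((∑ j, r (i, j) * X i j * w j) - t i) ^ 2
        = (∑ j, ∑ k, ((X i j * w j) * (X i k * w k)) * (r (i, j) * r (i, k)))
          + ((-2 * t i) * (∑ j, (X i j * w j) * r (i, j)) + (t i) ^ 2) := by
    intro i r
    have h1 : (∑ j, r (i, j) * X i j * w j) = ∑ j, (X i j * w j) * r (i, j) :=
      Finset.sum_congr rfl fun j _ => by ring
    have h2 : (∑ j, (X i j * w j) * r (i, j)) * (∑ k, (X i k * w k) * r (i, k))
        = ∑ j, ∑ k, ((X i j * w j) * (X i k * w k)) * (r (i, j) * r (i, k)) := by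
      rw [Finset.sum_mul_sum]
      exact Finset.sum_congr rfl fun j _ => Finset.sum_congr rfl fun k _ => by ring
    rw [h1, ← h2]; ring
  -- integrability of the three pieces
  have I1 : ∀ i : Fin n, Integrable
      (fun r : Fin n × Fin m → ℝ =>
        ∑ j, ∑ k, ((X i j * w j) * (X i k * w k)) * (r (i, j) * r (i, k)))
      (Measure.pi fun _ => ν) := fun i =>
    integrable_finset_sum _ fun j _ => integrable_finset_sum _ fun k _ =>
      ((dropout_integrable_mul hint (i, j) (i, k)).const_mul _)
  have I2 : ∀ i : Fin n, Integrable
      (fun r : Fin n × Fin m → ℝ =>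
        (-2 * t i) * (∑ j, (X i j * w j) * r (i, j)) + (t i) ^ 2)
      (Measure.pi fun _ => ν) := fun i =>
    (((integrable_finset_sum _ fun j _ =>
      (dropout_integrable_eval hint (i, j)).const_mul _).const_mul _).add
        (integrable_const _))
  have Iall : ∀ i : Fin n, Integrable
      (fun r : Fin n × Fin m → ℝ => ((∑ j, r (i, j) * X i j * w j) - t i) ^ 2)
      (Measure.pi fun _ => ν) := fun i =>
    ((I1 i).add (I2 i)).congr (Filter.Eventually.of_forall fun r => (hrew i r).symm)
  -- per-row expected value
  have key : ∀ i : Fin n,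
      ∫ r, ((∑ j, r (i, j) * X i j * w j) - t i) ^ 2 ∂(Measure.pi fun _ => ν)
        = (p * X.mulVec w i - t i) ^ 2 + p * (1 - p) * ∑ j, (X i j * w j) ^ 2 := by
    intro i
    rw [integral_congr_ae (Filter.Eventually.of_forall fun r => hrew i r),
      integral_add (I1 i) (I2 i),
      integral_add ((integrable_finset_sum _ fun j _ =>
        (dropout_integrable_eval hint (i, j)).const_mul _).const_mul _) (integrable_const _),
      integral_finset_sum _ (fun j _ => integrable_finset_sum _ fun k _ =>
        ((dropout_integrable_mul hint (i, j) (i, k)).const_mul _)),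
      integral_const_mul _ _,
      integral_finset_sum _ (fun j _ => (dropout_integrable_eval hint (i, j)).const_mul _)]
    have hin : ∀ j : Fin m,
        (∫ r : Fin n × Fin m → ℝ,
            ∑ k, X i j * w j * (X i k * w k) * (r (i, j) * r (i, k)) ∂(Measure.pi fun _ => ν))
          = ∑ k, X i j * w j * (X i k * w k)
              * (if ((i, j) : Fin n × Fin m) = (i, k) then p else p * p) := by
      intro j
      rw [integral_finset_sum _ (fun k _ =>
        ((dropout_integrable_mul hint (i, j) (i, k)).const_mul _))]
      simp_rw [integral_const_mul, dropout_integral_mul hm1 hm2]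
    simp_rw [hin, integral_const_mul, dropout_integral_eval hm1]
    have hpair : ∀ j k : Fin m, (((i, j) : Fin n × Fin m) = (i, k)) = (j = k) := by
      intro j k; simp [Prod.ext_iff]
    simp_rw [hpair, integral_const, probReal_univ, one_smul]
    -- now pure algebra with sums
    have hdd : (∑ j, ∑ k, ((X i j * w j) * (X i k * w k)) * (if j = k then p else p * p))
        = p * p * ((∑ j, X i j * w j) * (∑ j, X i j * w j))
          + (p - p * p) * ∑ j, (X i j * w j) ^ 2 := by
      have hrow : ∀ j : Fin m,
          (∑ k, ((X i j * w j) * (X i k * w k)) * (if j = k then p else p * p))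
            = p * p * ((X i j * w j) * (∑ k, X i k * w k))
              + (p - p * p) * (X i j * w j) ^ 2 := by
        intro j
        have hterm : ∀ k : Fin m,
            ((X i j * w j) * (X i k * w k)) * (if j = k then p else p * p)
              = p * p * ((X i j * w j) * (X i k * w k))
                + (if j = k then (p - p * p) * (X i j * w j) ^ 2 else 0) := by
          intro k
          split_ifs with h
          · subst h; ring
          · ring
        simp_rw [hterm]
        rw [Finset.sum_add_distrib, Finset.sum_ite_eq, if_pos (Finset.mem_univ j),
          ← Finset.mul_sum, ← Finset.mul_sum]
      simp_rw [hrow]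
      rw [Finset.sum_add_distrib, ← Finset.mul_sum, ← Finset.mul_sum, ← Finset.sum_mul]
    rw [hdd, ← Finset.sum_mul]
    have hmv : X.mulVec w i = ∑ j, X i j * w j := by
      simp [Matrix.mulVec, dotProduct]
    rw [hmv]; ring
  rw [hL w, integral_const_mul _ _, integral_finset_sum _ (fun i _ => Iall i)]
  simp_rw [key]
  rw [Finset.sum_add_distrib, mul_add]
  congr 1
  have hXX : ∀ j : Fin m, (Xᵀ * X) j j = ∑ i, X i j * X i j := by
    intro j; simp [Matrix.mul_apply]
  have hswap : (∑ i, ∑ j, (X i j * w j) ^ 2) = ∑ j, (Xᵀ * X) j j * (w j) ^ 2 := by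
    rw [Finset.sum_comm]
    exact Finset.sum_congr rfl fun j _ => by
      rw [hXX j, Finset.sum_mul]
      exact Finset.sum_congr rfl fun i _ => by ring
  rw [← Finset.mul_sum, ← hswap]
  ring
end
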